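/- The graded quasi-primary spectrum q.Spec_g(R) of a G-graded commutative ring R with the quasi-Zariski topology is quasi-compact. -/

import Mathlib

/-- The graded radical `Gr(I)` of an ideal `I` of a `G`-graded commutative ring:
the set of all `r` such that every homogeneous component of `r` has some positive
power in `I`. -/
def gradedRadical {G R : Type*} [AddGroup G] [DecidableEq G] [CommRing R]
    (𝒜 : G → AddSubgroup R) [GradedRing 𝒜] (I : Ideal R) : Set R :=
  {r : R | ∀ g : G, ∃ n : ℕ, 0 < n ∧ (DirectSum.decompose 𝒜 r g : R) ^ n ∈ I}

/-- An ideal is graded if it contains the homogeneous components of all its elements. -/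
def IsGradedIdeal {G R : Type*} [AddGroup G] [DecidableEq G] [CommRing R]
    (𝒜 : G → AddSubgroup R) [GradedRing 𝒜] (I : Ideal R) : Prop :=
  ∀ (g : G) ⦃r : R⦄, r ∈ I → (DirectSum.decompose 𝒜 r g : R) ∈ I

/-- A graded prime ideal: a proper graded ideal such that `r * s ∈ P` for homogeneous
`r, s` implies `r ∈ P` or `s ∈ P`. -/
def IsGradedPrimeIdeal {G R : Type*} [AddGroup G] [DecidableEq G] [CommRing R]
    (𝒜 : G → AddSubgroup R) [GradedRing 𝒜] (P : Ideal R) : Prop :=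
  P ≠ ⊤ ∧ IsGradedIdeal 𝒜 P ∧
    ∀ ⦃r s : R⦄, SetLike.IsHomogeneousElem 𝒜 r → SetLike.IsHomogeneousElem 𝒜 s →
      r * s ∈ P → r ∈ P ∨ s ∈ P

/-- A graded quasi-primary ideal: a proper graded ideal such that `a * b ∈ q` for
homogeneous `a, b` implies `a ∈ Gr(q)` or `b ∈ Gr(q)`. -/
def IsGradedQuasiPrimaryIdeal {G R : Type*} [AddGroup G] [DecidableEq G] [CommRing R]
    (𝒜 : G → AddSubgroup R) [GradedRing 𝒜] (q : Ideal R) : Prop :=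
  q ≠ ⊤ ∧ IsGradedIdeal 𝒜 q ∧
    ∀ ⦃a b : R⦄, SetLike.IsHomogeneousElem 𝒜 a → SetLike.IsHomogeneousElem 𝒜 b →
      a * b ∈ q → a ∈ gradedRadical 𝒜 q ∨ b ∈ gradedRadical 𝒜 q

/-- The graded quasi-primary spectrum of `R`: the set of all graded quasi-primary ideals. -/
def qpSpecR {G R : Type*} [AddGroup G] [DecidableEq G] [CommRing R]
    (𝒜 : G → AddSubgroup R) [GradedRing 𝒜] : Set (Ideal R) :=
  {q : Ideal R | IsGradedQuasiPrimaryIdeal 𝒜 q}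

/-- The variety `qp-V_R^g(I) = { q ∈ q.Spec_g(R) : Gr(q) ⊇ I }`. -/
def qpVR {G R : Type*} [AddGroup G] [DecidableEq G] [CommRing R]
    (𝒜 : G → AddSubgroup R) [GradedRing 𝒜] (I : Ideal R) : Set (qpSpecR 𝒜) :=
  {q : qpSpecR 𝒜 | (I : Set R) ⊆ gradedRadical 𝒜 q.1}

/-- The quasi-Zariski topology on `q.Spec_g(R)`, generated by the complements of the
varieties of graded ideals. -/
def qpZariskiR {G R : Type*} [AddGroup G] [DecidableEq G] [CommRing R]
    (𝒜 : G → AddSubgroup R) [GradedRing 𝒜] : TopologicalSpace (qpSpecR 𝒜) :=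
  TopologicalSpace.generateFrom
    {U : Set (qpSpecR 𝒜) | ∃ I : Ideal R, IsGradedIdeal 𝒜 I ∧ U = (qpVR 𝒜 I)ᶜ}

section Aux

open DirectSum

variable {G R : Type*} [AddGroup G] [DecidableEq G] [CommRing R]
  (𝒜 : G → AddSubgroup R) [GradedRing 𝒜]

lemma mem_gradedRadical_iff (q : Ideal R) (r : R) :
    r ∈ gradedRadical 𝒜 q ↔ ∀ g : G, (DirectSum.decompose 𝒜 r g : R) ∈ q.radical := by
  constructor
  · rintro h g
    obtain ⟨n, -, hn⟩ := h g
    exact ⟨n, hn⟩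
  · intro h g
    obtain ⟨n, hn⟩ := h g
    rcases Nat.eq_zero_or_pos n with rfl | npos
    · rw [pow_zero] at hn
      have hq : q = ⊤ := (Ideal.eq_top_iff_one q).2 hn
      exact ⟨1, one_pos, by simp [hq]⟩
    · exact ⟨n, npos, hn⟩

lemma hom_mem_gradedRadical_iff {q : Ideal R} {a : R} {d : G} (ha : a ∈ 𝒜 d) :
    a ∈ gradedRadical 𝒜 q ↔ a ∈ q.radical := by
  rw [mem_gradedRadical_iff]
  constructor
  · intro h
    have := h d
    rwa [DirectSum.decompose_of_mem_same 𝒜 ha] at this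
  · intro h g
    by_cases hg : d = g
    · subst hg; rwa [DirectSum.decompose_of_mem_same 𝒜 ha]
    · rw [DirectSum.decompose_of_mem_ne 𝒜 ha hg]
      exact q.radical.zero_mem

lemma one_not_mem_gradedRadical {q : Ideal R} (hq : q ≠ ⊤) :
    (1 : R) ∉ gradedRadical 𝒜 q := by
  intro h
  rw [hom_mem_gradedRadical_iff 𝒜 (SetLike.one_mem_graded 𝒜)] at h
  obtain ⟨n, hn⟩ := h
  rw [one_pow] at hn
  exact hq ((Ideal.eq_top_iff_one q).2 hn)

lemma mem_gradedRadical_of_mem {I : Ideal R} (hI : IsGradedIdeal 𝒜 I) {r : R}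
    (hr : r ∈ I) : r ∈ gradedRadical 𝒜 I :=
  fun g => ⟨1, one_pos, by rw [pow_one]; exact hI g hr⟩

/-- `gradedRadical` as an ideal. -/
def gradedRadicalIdeal (q : Ideal R) : Ideal R where
  carrier := gradedRadical 𝒜 q
  zero_mem' := by
    show (0 : R) ∈ gradedRadical 𝒜 q
    rw [mem_gradedRadical_iff]
    intro g
    simp
  add_mem' := by
    intro a b ha hb
    show a + b ∈ gradedRadical 𝒜 q
    rw [mem_gradedRadical_iff] at *
    intro g
    rw [DirectSum.decompose_add]
    push_cast
    exact q.radical.add_mem (ha g) (hb g)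
  smul_mem' := by
    intro c x hx
    classical
    show c • x ∈ gradedRadical 𝒜 q
    replace hx : x ∈ gradedRadical 𝒜 q := hx
    rw [mem_gradedRadical_iff] at *
    intro g
    have hxe : c • x = ∑ i ∈ (DirectSum.decompose 𝒜 x).support,
        c * (DirectSum.decompose 𝒜 x i : R) := by
      rw [smul_eq_mul, ← Finset.mul_sum, DirectSum.sum_support_decompose]
    rw [hxe]
    have : (DirectSum.decompose 𝒜 (∑ i ∈ (DirectSum.decompose 𝒜 x).support,
        c * (DirectSum.decompose 𝒜 x i : R)) g : R) =
        ∑ i ∈ (DirectSum.decompose 𝒜 x).support,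
          (DirectSum.decompose 𝒜 (c * (DirectSum.decompose 𝒜 x i : R)) g : R) := by
      rw [DirectSum.decompose_sum]
      rw [DFinsupp.finset_sum_apply]
      push_cast
      rfl
    rw [this]
    refine Ideal.sum_mem _ fun i _ => ?_
    have hterm : (DirectSum.decompose 𝒜 (c * (DirectSum.decompose 𝒜 x i : R)) g : R)
        = (DirectSum.decompose 𝒜 c (g - i) : R) * (DirectSum.decompose 𝒜 x i : R) := by
      have := DirectSum.coe_decompose_mul_add_of_right_mem 𝒜 (i := g - i) (a := c)
        (SetLike.coe_mem (DirectSum.decompose 𝒜 x i))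
      rwa [sub_add_cancel] at this
    rw [hterm]
    exact Ideal.mul_mem_left _ _ (hx i)

lemma mem_gradedRadicalIdeal_iff (q : Ideal R) (r : R) :
    r ∈ gradedRadicalIdeal 𝒜 q ↔ r ∈ gradedRadical 𝒜 q := Iff.rfl

lemma isGradedIdeal_top : IsGradedIdeal 𝒜 (⊤ : Ideal R) := fun _ _ _ => trivial

lemma isGradedIdeal_inf {I J : Ideal R} (hI : IsGradedIdeal 𝒜 I) (hJ : IsGradedIdeal 𝒜 J) :
    IsGradedIdeal 𝒜 (I ⊓ J) := fun g r hr => ⟨hI g hr.1, hJ g hr.2⟩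

lemma isGradedIdeal_sup {I J : Ideal R} (hI : IsGradedIdeal 𝒜 I) (hJ : IsGradedIdeal 𝒜 J) :
    IsGradedIdeal 𝒜 (I ⊔ J) := by
  intro g r hr
  obtain ⟨a, ha, b, hb, rfl⟩ := Submodule.mem_sup.1 hr
  rw [DirectSum.decompose_add]
  push_cast
  exact Submodule.add_mem _ (Submodule.mem_sup_left (hI g ha)) (Submodule.mem_sup_right (hJ g hb))

lemma isGradedIdeal_iSup {ι : Sort*} {f : ι → Ideal R} (hf : ∀ i, IsGradedIdeal 𝒜 (f i)) :
    IsGradedIdeal 𝒜 (⨆ i, f i) := by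
  intro g r hr
  refine Submodule.iSup_induction (motive := fun x => (DirectSum.decompose 𝒜 x g : R) ∈ ⨆ i, f i)
    f hr (fun i x hx => ?_) (by simp) (fun x y hx hy => ?_)
  · exact Submodule.mem_iSup_of_mem i (hf i g hx)
  · show (DirectSum.decompose 𝒜 (x + y) g : R) ∈ ⨆ i, f i
    rw [DirectSum.decompose_add]; push_cast; exact Submodule.add_mem _ hx hy

lemma isGradedIdeal_span_singleton {r : R} (hr : SetLike.IsHomogeneousElem 𝒜 r) :
    IsGradedIdeal 𝒜 (Ideal.span {r}) := by
  obtain ⟨d, hd⟩ := hr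
  intro g x hx
  obtain ⟨c, rfl⟩ := Ideal.mem_span_singleton'.1 hx
  have : (DirectSum.decompose 𝒜 (c * r) g : R)
      = (DirectSum.decompose 𝒜 c (g - d) : R) * r := by
    have := DirectSum.coe_decompose_mul_add_of_right_mem 𝒜 (i := g - d) (a := c) hd
    rwa [sub_add_cancel] at this
  rw [this]
  exact Ideal.mul_mem_left _ _ (Ideal.mem_span_singleton_self r)

/-- Every proper graded ideal is contained in a maximal proper graded ideal. -/
lemma exists_maximal_graded (J : Ideal R) (hJ : IsGradedIdeal 𝒜 J) (h1 : (1 : R) ∉ J) :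
    ∃ m : Ideal R, J ≤ m ∧ IsGradedIdeal 𝒜 m ∧ (1 : R) ∉ m ∧
      ∀ I : Ideal R, IsGradedIdeal 𝒜 I → (1 : R) ∉ I → m ≤ I → I = m := by
  set s : Set (Ideal R) := {I | IsGradedIdeal 𝒜 I ∧ (1 : R) ∉ I} with hs
  have hzorn : ∀ c ⊆ s, IsChain (· ≤ ·) c → ∀ y ∈ c, ∃ ub ∈ s, ∀ z ∈ c, z ≤ ub := by
    intro c hcs hchain y hy
    have hne : c.Nonempty := ⟨y, hy⟩
    have hdir : DirectedOn (· ≤ ·) c := hchain.directedOn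
    refine ⟨sSup c, ⟨?_, ?_⟩, fun z hz => le_sSup hz⟩
    · intro g r hr
      obtain ⟨I, hIc, hrI⟩ := (Submodule.mem_sSup_of_directed hne hdir).1 hr
      exact le_sSup hIc ((hcs hIc).1 g hrI)
    · intro h
      obtain ⟨I, hIc, hI⟩ := (Submodule.mem_sSup_of_directed hne hdir).1 h
      exact (hcs hIc).2 hI
  obtain ⟨m, hJm, hms, hmax⟩ := zorn_le_nonempty₀ s hzorn J ⟨hJ, h1⟩
  exact ⟨m, hJm, hms.1, hms.2, fun I hIg hI1 hmI =>
    le_antisymm (hmax ⟨hIg, hI1⟩ hmI) hmI⟩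

lemma maximal_graded_isPrime {m : Ideal R} (hm : IsGradedIdeal 𝒜 m) (h1 : (1 : R) ∉ m)
    (hmax : ∀ I : Ideal R, IsGradedIdeal 𝒜 I → (1 : R) ∉ I → m ≤ I → I = m) :
    IsGradedPrimeIdeal 𝒜 m := by
  refine ⟨fun h => h1 (h ▸ Submodule.mem_top), hm, ?_⟩
  intro r s hr hs hrs
  by_cases hrm : r ∈ m
  · exact Or.inl hrm
  right
  set m' : Ideal R := m ⊔ Ideal.span {r} with hm'
  have hm'g : IsGradedIdeal 𝒜 m' := isGradedIdeal_sup 𝒜 hm (isGradedIdeal_span_singleton 𝒜 hr)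
  have h1m' : (1 : R) ∈ m' := by
    by_contra h1m'
    have := hmax m' hm'g h1m' le_sup_left
    exact hrm (this ▸ Submodule.mem_sup_right (Ideal.mem_span_singleton_self r))
  obtain ⟨a, ha, b, hb, hab⟩ := Submodule.mem_sup.1 h1m'
  obtain ⟨t, rfl⟩ := Ideal.mem_span_singleton'.1 hb
  have : s = s * a + t * (r * s) := by ring_nf; rw [← mul_one s]; nth_rw 1 [← hab]; ring
  rw [this]
  exact m.add_mem (Ideal.mul_mem_left _ _ ha) (Ideal.mul_mem_left _ _ hrs)

lemma gradedPrime_isQuasiPrimary {P : Ideal R} (hP : IsGradedPrimeIdeal 𝒜 P) :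
    IsGradedQuasiPrimaryIdeal 𝒜 P := by
  obtain ⟨hPt, hPg, hPp⟩ := hP
  refine ⟨hPt, hPg, fun a b ha hb hab => ?_⟩
  rcases hPp ha hb hab with h | h
  · exact Or.inl (mem_gradedRadical_of_mem 𝒜 hPg h)
  · exact Or.inr (mem_gradedRadical_of_mem 𝒜 hPg h)

lemma inf_subset_gradedRadical {q : Ideal R} (hq : IsGradedQuasiPrimaryIdeal 𝒜 q)
    {I J : Ideal R} (hI : IsGradedIdeal 𝒜 I) (hJ : IsGradedIdeal 𝒜 J)
    (h : ((I ⊓ J : Ideal R) : Set R) ⊆ gradedRadical 𝒜 q) :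
    (I : Set R) ⊆ gradedRadical 𝒜 q ∨ (J : Set R) ⊆ gradedRadical 𝒜 q := by
  by_cases hIc : (I : Set R) ⊆ gradedRadical 𝒜 q
  · exact Or.inl hIc
  right
  rw [Set.not_subset] at hIc
  obtain ⟨r, hrI, hrG⟩ := hIc
  replace hrG : ¬ ∀ g : G, (DirectSum.decompose 𝒜 r g : R) ∈ q.radical := by
    intro hall
    exact hrG ((mem_gradedRadical_iff 𝒜 q r).2 hall)
  rw [not_forall] at hrG
  obtain ⟨d, hd⟩ := hrG
  set a : R := (DirectSum.decompose 𝒜 r d : R) with hadef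
  have haI : a ∈ I := hI d hrI
  have haA : a ∈ 𝒜 d := SetLike.coe_mem _
  intro b hb
  show b ∈ gradedRadical 𝒜 q
  rw [mem_gradedRadical_iff]
  intro g
  set c : R := (DirectSum.decompose 𝒜 b g : R) with hcdef
  have hcJ : c ∈ J := hJ g hb
  have hcA : c ∈ 𝒜 g := SetLike.coe_mem _
  have hac : a * c ∈ gradedRadical 𝒜 q :=
    h ⟨Ideal.mul_mem_right c I haI, Ideal.mul_mem_left J a hcJ⟩
  rw [hom_mem_gradedRadical_iff 𝒜 (SetLike.mul_mem_graded haA hcA)] at hac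
  obtain ⟨n, hn⟩ := hac
  rw [mul_pow] at hn
  rcases hq.2.2 ⟨_, SetLike.pow_mem_graded n haA⟩ ⟨_, SetLike.pow_mem_graded n hcA⟩ hn with h' | h'
  · exfalso
    rw [hom_mem_gradedRadical_iff 𝒜 (SetLike.pow_mem_graded n haA)] at h'
    exact hd (Ideal.mem_radical_of_pow_mem h')
  · rw [hom_mem_gradedRadical_iff 𝒜 (SetLike.pow_mem_graded n hcA)] at h'
    exact Ideal.mem_radical_of_pow_mem h'

lemma qpVR_inf {I J : Ideal R} (hI : IsGradedIdeal 𝒜 I) (hJ : IsGradedIdeal 𝒜 J) :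
    qpVR 𝒜 (I ⊓ J) = qpVR 𝒜 I ∪ qpVR 𝒜 J := by
  ext q
  constructor
  · intro hq
    rcases inf_subset_gradedRadical 𝒜 q.2 hI hJ hq with h | h
    · exact Or.inl h
    · exact Or.inr h
  · rintro (hq | hq)
    · exact fun x hx => hq (Set.mem_of_mem_of_subset hx (SetLike.coe_subset_coe.2 inf_le_left))
    · exact fun x hx => hq (Set.mem_of_mem_of_subset hx (SetLike.coe_subset_coe.2 inf_le_right))

end Aux

/-- The graded quasi-primary spectrum of `R` with the quasi-Zariski topology is
quasi-compact. -/
theorem qpSpecR_compactSpace {G R : Type*} [AddGroup G] [DecidableEq G]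
    [CommRing R] (𝒜 : G → AddSubgroup R) [GradedRing 𝒜] :
    @CompactSpace (qpSpecR 𝒜) (qpZariskiR 𝒜) := by
  letI := qpZariskiR 𝒜
  constructor
  apply isCompact_of_finite_subcover
  intro ι U hU hcover
  classical
  have hbasis : TopologicalSpace.IsTopologicalBasis
      (insert Set.univ
        {V : Set (qpSpecR 𝒜) | ∃ I : Ideal R, IsGradedIdeal 𝒜 I ∧ V = (qpVR 𝒜 I)ᶜ}) := by
    refine TopologicalSpace.isTopologicalBasis_of_subbasis_of_inter rfl ?_
    rintro _ ⟨I, hI, rfl⟩ _ ⟨J, hJ, rfl⟩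
    exact ⟨I ⊓ J, isGradedIdeal_inf 𝒜 hI hJ, by
      rw [qpVR_inf 𝒜 hI hJ, Set.compl_union]⟩
  have key : ∀ q : qpSpecR 𝒜, ∃ (I : Ideal R) (i : ι),
      IsGradedIdeal 𝒜 I ∧ q ∈ (qpVR 𝒜 I)ᶜ ∧ (qpVR 𝒜 I)ᶜ ⊆ U i := by
    intro q
    obtain ⟨i, hi⟩ := Set.mem_iUnion.1 (hcover (Set.mem_univ q))
    obtain ⟨B, hB, hqB, hBU⟩ := hbasis.exists_subset_of_mem_open hi (hU i)
    rcases hB with rfl | ⟨I, hI, rfl⟩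
    · refine ⟨⊤, i, isGradedIdeal_top 𝒜, ?_, fun x _ => hBU (Set.mem_univ x)⟩
      intro hq
      exact one_not_mem_gradedRadical 𝒜 q.2.1 (hq (Submodule.mem_top (x := (1 : R))))
    · exact ⟨I, i, hI, hqB, hBU⟩
  choose I idx hgr hmem hsub using key
  have hone : (1 : R) ∈ ⨆ q : qpSpecR 𝒜, I q := by
    by_contra h1
    obtain ⟨m, hJm, hmg, hm1, hmax⟩ :=
      exists_maximal_graded 𝒜 _ (isGradedIdeal_iSup 𝒜 hgr) h1
    have hqp : IsGradedQuasiPrimaryIdeal 𝒜 m :=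
      gradedPrime_isQuasiPrimary 𝒜 (maximal_graded_isPrime 𝒜 hmg hm1 hmax)
    refine hmem ⟨m, hqp⟩ ?_
    intro x hx
    exact mem_gradedRadical_of_mem 𝒜 hmg (hJm (Submodule.mem_iSup_of_mem ⟨m, hqp⟩ hx))
  obtain ⟨s, hs⟩ := Submodule.exists_finset_of_mem_iSup _ hone
  refine ⟨s.image idx, fun p _ => ?_⟩
  have hps : ∃ q ∈ s, p ∈ (qpVR 𝒜 (I q))ᶜ := by
    by_contra hc
    push_neg at hc
    have hle : ∀ q ∈ s, I q ≤ gradedRadicalIdeal 𝒜 p.1 := by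
      intro q hq
      have hmem' : p ∈ qpVR 𝒜 (I q) := Set.not_notMem.1 (hc q hq)
      exact fun x hx => hmem' hx
    have h1p : (1 : R) ∈ gradedRadicalIdeal 𝒜 p.1 := (iSup₂_le hle) hs
    exact one_not_mem_gradedRadical 𝒜 p.2.1 h1p
  obtain ⟨q, hqs, hpq⟩ := hps
  exact Set.mem_biUnion (Finset.mem_coe.2 (Finset.mem_image_of_mem idx hqs)) (hsub q hpq)
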